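/- Download cost lower bound from secrecy: suppose W has H(W) = L, answers A_n satisfy H(A_n | S_n) = 0 for each n, H(W | (A_n)_{n∈[N]\D}) = 0, and for every subset X ⊆ [N]\D with |X| = R_r - K_c one has I(W; (S_n)_{n∈X}) = 0. Then Σ_{n∈[N]\D} H(A_n) ≥ L·(N-|D|)/(N-R_r+K_c-|D|). -/

import Mathlib

open scoped BigOperators

/-- `p` is a probability mass function on the finite sample space `Ω`. -/
def IsPMF {Ω : Type} [Fintype Ω] (p : Ω → ℝ) : Prop :=
  (∀ ω, 0 ≤ p ω) ∧ ∑ ω : Ω, p ω = 1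

open Classical in
/-- Probability of the event `E` under the pmf `p`. -/
noncomputable def probEvent {Ω : Type} [Fintype Ω] (p : Ω → ℝ) (E : Ω → Prop) : ℝ :=
  ∑ ω : Ω, if E ω then p ω else 0

/-- Shannon entropy (base `b`) of the random variable `X` under the pmf `p`. -/
noncomputable def entH {Ω α : Type} [Fintype Ω] [Fintype α]
    (b : ℝ) (p : Ω → ℝ) (X : Ω → α) : ℝ :=
  -∑ x : α, probEvent p (fun ω => X ω = x) * Real.logb b (probEvent p (fun ω => X ω = x))

/-- Conditional entropy `H(X | Y) = H(X,Y) - H(Y)`. -/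
noncomputable def condH {Ω α β : Type} [Fintype Ω] [Fintype α] [Fintype β]
    (b : ℝ) (p : Ω → ℝ) (X : Ω → α) (Y : Ω → β) : ℝ :=
  entH b p (fun ω => (X ω, Y ω)) - entH b p Y

/-- Mutual information `I(X;Y) = H(X) + H(Y) - H(X,Y)`. -/
noncomputable def mutI {Ω α β : Type} [Fintype Ω] [Fintype α] [Fintype β]
    (b : ℝ) (p : Ω → ℝ) (X : Ω → α) (Y : Ω → β) : ℝ :=
  entH b p X + entH b p Y - entH b p (fun ω => (X ω, Y ω))

/-- Conditional mutual information `I(X;Y | Z) = H(X|Z) - H(X|Y,Z)`. -/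
noncomputable def condMI {Ω α β δ : Type} [Fintype Ω] [Fintype α] [Fintype β] [Fintype δ]
    (b : ℝ) (p : Ω → ℝ) (X : Ω → α) (Y : Ω → β) (Z : Ω → δ) : ℝ :=
  condH b p X Z - condH b p X (fun ω => (Y ω, Z ω))

/-- `X` and `Y` are independent random variables under `p`. -/
def IndepRV {Ω α β : Type} [Fintype Ω] [Fintype α] [Fintype β]
    (p : Ω → ℝ) (X : Ω → α) (Y : Ω → β) : Prop :=
  ∀ x y, probEvent p (fun ω => X ω = x ∧ Y ω = y)
    = probEvent p (fun ω => X ω = x) * probEvent p (fun ω => Y ω = y)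

/-- `X` is uniformly distributed under `p`. -/
def IsUniform {Ω α : Type} [Fintype Ω] [Fintype α] (p : Ω → ℝ) (X : Ω → α) : Prop :=
  ∀ x, probEvent p (fun ω => X ω = x) = ((Fintype.card α : ℝ))⁻¹

namespace DLB
open Real Finset

variable {Ω : Type} [Fintype Ω] {p : Ω → ℝ}

lemma probEvent_nonneg (h0 : ∀ ω, 0 ≤ p ω) (E : Ω → Prop) : 0 ≤ probEvent p E := by
  unfold probEvent
  exact Finset.sum_nonneg fun ω _ => by split <;> simp [h0 ω]

lemma probEvent_ext {E F : Ω → Prop} (h : ∀ ω, E ω ↔ F ω) :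
    probEvent p E = probEvent p F := by
  classical
  unfold probEvent
  exact Finset.sum_congr rfl fun ω _ => if_congr (h ω) rfl rfl

lemma probEvent_congr (h0 : ∀ ω, 0 ≤ p ω) {E F : Ω → Prop}
    (h : ∀ ω, 0 < p ω → (E ω ↔ F ω)) : probEvent p E = probEvent p F := by
  classical
  unfold probEvent
  refine Finset.sum_congr rfl fun ω _ => ?_
  rcases (h0 ω).eq_or_lt with hp0 | hp0
  · split <;> split <;> simp [← hp0]
  · exact if_congr (h ω hp0) rfl rfl

lemma probEvent_mono (h0 : ∀ ω, 0 ≤ p ω) {E F : Ω → Prop} (h : ∀ ω, E ω → F ω) :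
    probEvent p E ≤ probEvent p F := by
  classical
  unfold probEvent
  refine Finset.sum_le_sum fun ω _ => ?_
  by_cases hE : E ω
  · simp [hE, h ω hE]
  · simp only [hE, if_false]
    split <;> simp [h0 ω]

lemma single_le_probEvent (h0 : ∀ ω, 0 ≤ p ω) {E : Ω → Prop} {ω : Ω} (hE : E ω) :
    p ω ≤ probEvent p E := by
  classical
  unfold probEvent
  have hnn : ∀ i ∈ Finset.univ, 0 ≤ if E i then p i else 0 := fun i _ => by
    by_cases h : E i <;> simp [h, h0 i]
  have := Finset.single_le_sum hnn (Finset.mem_univ ω)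
  simpa [hE] using this

lemma probEvent_le_one (hp : IsPMF p) (E : Ω → Prop) : probEvent p E ≤ 1 := by
  have h := probEvent_mono hp.1 (E := E) (F := fun _ => True) (fun ω _ => trivial)
  have h2 : probEvent p (fun _ => True) = 1 := by
    unfold probEvent; simpa using hp.2
  linarith

lemma sum_probEvent_fiber {α : Type} [Fintype α] (X : Ω → α) (Q : Ω → Prop) :
    ∑ x : α, probEvent p (fun ω => X ω = x ∧ Q ω) = probEvent p Q := by
  classical
  unfold probEvent
  rw [Finset.sum_comm]
  refine Finset.sum_congr rfl fun ω _ => ?_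
  by_cases hQ : Q ω
  · simp [hQ]
  · simp [hQ]

lemma sum_dist (hp : IsPMF p) {α : Type} [Fintype α] (X : Ω → α) :
    ∑ x : α, probEvent p (fun ω => X ω = x) = 1 := by
  classical
  rw [← hp.2]
  unfold probEvent
  rw [Finset.sum_comm]
  exact Finset.sum_congr rfl fun ω _ => by simp

end DLB

namespace DLB2
open Real Finset DLB

variable {Ω : Type} [Fintype Ω] {p : Ω → ℝ} {b : ℝ}

lemma entH_eq {α : Type} [Fintype α] (hb : 1 < b) (X : Ω → α) :
    entH b p X = (∑ x : α, Real.negMulLog (probEvent p (fun ω => X ω = x))) / Real.log b := by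
  have hlb : Real.log b ≠ 0 := ne_of_gt (Real.log_pos hb)
  unfold entH
  rw [eq_div_iff hlb, neg_mul, Finset.sum_mul]
  rw [← Finset.sum_neg_distrib]
  refine Finset.sum_congr rfl fun x _ => ?_
  rw [Real.logb, Real.negMulLog]
  field_simp

lemma entH_nonneg {α : Type} [Fintype α] (hb : 1 < b) (hp : IsPMF p) (X : Ω → α) :
    0 ≤ entH b p X := by
  rw [entH_eq hb]
  apply div_nonneg _ (Real.log_pos hb).le
  exact Finset.sum_nonneg fun x _ =>
    Real.negMulLog_nonneg (probEvent_nonneg hp.1 _) (probEvent_le_one hp _)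

lemma entH_subsingleton {α : Type} [Fintype α] [Subsingleton α] (hp : IsPMF p) (X : Ω → α) :
    entH b p X = 0 := by
  unfold entH
  rw [neg_eq_zero]
  refine Finset.sum_eq_zero fun x _ => ?_
  have : probEvent p (fun ω => X ω = x) = 1 := by
    have : probEvent p (fun ω => X ω = x) = probEvent p (fun _ => True) :=
      probEvent_ext fun ω => by simp [Subsingleton.elim (X ω) x]
    rw [this]
    unfold probEvent; simpa using hp.2
  simp [this]

lemma entH_congr {α : Type} [Fintype α] (h0 : ∀ ω, 0 ≤ p ω) {X Y : Ω → α}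
    (h : ∀ ω, 0 < p ω → X ω = Y ω) : entH b p X = entH b p Y := by
  unfold entH
  congr 1
  refine Finset.sum_congr rfl fun x _ => ?_
  rw [probEvent_congr h0 (fun ω hω => by rw [h ω hω])]

lemma entH_comp_inj {α β : Type} [Fintype α] [Fintype β] {g : α → β}
    (hg : Function.Injective g) {X : Ω → α} {X' : Ω → β}
    (hX : ∀ ω, X' ω = g (X ω)) : entH b p X' = entH b p X := by
  classical
  unfold entH
  congr 1
  have h1 : ∀ y, y ∉ Finset.univ.image g →
      probEvent p (fun ω => X' ω = y) = 0 := by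
    intro y hy
    have : probEvent p (fun ω => X' ω = y) = probEvent p (fun _ => False) := by
      refine probEvent_ext fun ω => ?_
      simp only [hX ω, iff_false]
      intro hgy
      exact hy (Finset.mem_image.2 ⟨X ω, Finset.mem_univ _, hgy⟩)
    rw [this]
    unfold probEvent; simp
  rw [← Finset.sum_subset (Finset.subset_univ (Finset.univ.image g))
      (fun y _ hy => by rw [h1 y hy]; simp)]
  rw [Finset.sum_image (fun x _ y _ h => hg h)]
  refine Finset.sum_congr rfl fun x _ => ?_
  have : probEvent p (fun ω => X' ω = g x) = probEvent p (fun ω => X ω = x) :=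
    probEvent_ext fun ω => by rw [hX ω]; exact hg.eq_iff
  rw [this]

end DLB2

namespace DLB3
open Real Finset DLB DLB2

variable {Ω : Type} [Fintype Ω] {p : Ω → ℝ} {b : ℝ}

lemma negMulLog_sum_le {ι : Type} (s : Finset ι) (a : ι → ℝ) (ha : ∀ i ∈ s, 0 ≤ a i) :
    Real.negMulLog (∑ i ∈ s, a i) ≤ ∑ i ∈ s, Real.negMulLog (a i) := by
  have hS : 0 ≤ ∑ i ∈ s, a i := Finset.sum_nonneg ha
  rw [Real.negMulLog, neg_mul, Finset.sum_mul, ← Finset.sum_neg_distrib]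
  refine Finset.sum_le_sum fun i hi => ?_
  rcases (ha i hi).eq_or_lt with h0 | h0
  · simp [← h0]
  · have hle : a i ≤ ∑ i ∈ s, a i := Finset.single_le_sum ha hi
    have := Real.log_le_log h0 hle
    rw [Real.negMulLog]
    nlinarith

lemma marginal_snd {α β : Type} [Fintype α] [Fintype β] (X : Ω → α) (Y : Ω → β) (y : β) :
    probEvent p (fun ω => Y ω = y) = ∑ x : α, probEvent p (fun ω => (X ω, Y ω) = (x, y)) := by
  rw [← sum_probEvent_fiber X (fun ω => Y ω = y)]
  exact Finset.sum_congr rfl fun x _ => probEvent_ext fun ω => by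
    simp [Prod.ext_iff, and_comm]

lemma entH_snd_le {α β : Type} [Fintype α] [Fintype β] (hb : 1 < b) (hp : IsPMF p)
    (X : Ω → α) (Y : Ω → β) :
    entH b p Y ≤ entH b p (fun ω => (X ω, Y ω)) := by
  rw [entH_eq hb, entH_eq hb]
  gcongr (?_ : ℝ) / _
  · exact (Real.log_pos hb).le
  rw [Fintype.sum_prod_type, Finset.sum_comm]
  refine Finset.sum_le_sum fun y _ => ?_
  rw [marginal_snd X Y y]
  exact negMulLog_sum_le _ _ fun x _ => probEvent_nonneg hp.1 _

end DLB3

namespace DLB4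
open Real Finset DLB DLB2 DLB3

variable {Ω : Type} [Fintype Ω] {p : Ω → ℝ} {b : ℝ}

lemma condMI_nonneg {α β δ : Type} [Fintype α] [Fintype β] [Fintype δ]
    (hb : 1 < b) (hp : IsPMF p) (X : Ω → α) (Y : Ω → β) (Z : Ω → δ) :
    0 ≤ condMI b p X Y Z := by
  classical
  have hc : (0:ℝ) < Real.log b := Real.log_pos hb
  set r : α → β → δ → ℝ := fun x y z => probEvent p (fun ω => (X ω, Y ω, Z ω) = (x, y, z))
    with hrdef
  have hr0 : ∀ x y z, 0 ≤ r x y z := fun x y z => probEvent_nonneg hp.1 _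
  -- marginals
  have hxz : ∀ x z, probEvent p (fun ω => (X ω, Z ω) = (x, z)) = ∑ y : β, r x y z := by
    intro x z
    rw [← sum_probEvent_fiber Y (fun ω => (X ω, Z ω) = (x, z))]
    exact Finset.sum_congr rfl fun y _ => probEvent_ext fun ω => by
      simp only [Prod.ext_iff]
      try tauto
  have hyz : ∀ y z, probEvent p (fun ω => (Y ω, Z ω) = (y, z)) = ∑ x : α, r x y z := by
    intro y z
    rw [← sum_probEvent_fiber X (fun ω => (Y ω, Z ω) = (y, z))]
    exact Finset.sum_congr rfl fun x _ => probEvent_ext fun ω => by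
      simp only [Prod.ext_iff]
      try tauto
  have hz : ∀ z, probEvent p (fun ω => Z ω = z) = ∑ x : α, ∑ y : β, r x y z := by
    intro z
    rw [← sum_probEvent_fiber X (fun ω => Z ω = z)]
    refine Finset.sum_congr rfl fun x _ => ?_
    rw [← sum_probEvent_fiber Y (fun ω => X ω = x ∧ Z ω = z)]
    exact Finset.sum_congr rfl fun y _ => probEvent_ext fun ω => by
      simp only [Prod.ext_iff]
      try tauto
  have htot : ∑ x : α, ∑ y : β, ∑ z : δ, r x y z = 1 := by
    simpa only [Fintype.sum_prod_type] using sum_dist hp (fun ω => (X ω, Y ω, Z ω))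
  -- positivity facts on the support
  have hRxz_pos : ∀ {x y z}, 0 < r x y z → 0 < ∑ y' : β, r x y' z := fun {x y z} h =>
    lt_of_lt_of_le h (Finset.single_le_sum (fun i _ => hr0 x i z) (Finset.mem_univ y))
  have hRyz_pos : ∀ {x y z}, 0 < r x y z → 0 < ∑ x' : α, r x' y z := fun {x y z} h =>
    lt_of_lt_of_le h (Finset.single_le_sum (fun i _ => hr0 i y z) (Finset.mem_univ x))
  have hQz_pos : ∀ {x y z}, 0 < r x y z → 0 < ∑ x' : α, ∑ y' : β, r x' y' z := fun {x y z} h =>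
    lt_of_lt_of_le (hRxz_pos h)
      (Finset.single_le_sum (fun i _ => Finset.sum_nonneg fun j _ => hr0 i j z)
        (Finset.mem_univ x))
  -- rewrite the four entropies
  have hA : entH b p (fun ω => (X ω, Z ω))
      = (∑ x : α, ∑ z : δ, Real.negMulLog (∑ y : β, r x y z)) / Real.log b := by
    rw [entH_eq hb]
    congr 1
    rw [Fintype.sum_prod_type]
    exact Finset.sum_congr rfl fun x _ => Finset.sum_congr rfl fun z _ => by rw [hxz]
  have hB : entH b p Z = (∑ z : δ, Real.negMulLog (∑ x : α, ∑ y : β, r x y z)) / Real.log b := by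
    rw [entH_eq hb]
    congr 1
    exact Finset.sum_congr rfl fun z _ => by rw [hz]
  have hC : entH b p (fun ω => (X ω, (Y ω, Z ω)))
      = (∑ x : α, ∑ y : β, ∑ z : δ, Real.negMulLog (r x y z)) / Real.log b := by
    rw [entH_eq hb]
    congr 1
    rw [Fintype.sum_prod_type]
    simp only [Fintype.sum_prod_type]
    rfl
  have hD : entH b p (fun ω => (Y ω, Z ω))
      = (∑ y : β, ∑ z : δ, Real.negMulLog (∑ x : α, r x y z)) / Real.log b := by
    rw [entH_eq hb]
    congr 1
    rw [Fintype.sum_prod_type]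
    exact Finset.sum_congr rfl fun y _ => Finset.sum_congr rfl fun z _ => by rw [hyz]
  have hform : condMI b p X Y Z
      = ((∑ x : α, ∑ z : δ, Real.negMulLog (∑ y : β, r x y z))
        + (∑ y : β, ∑ z : δ, Real.negMulLog (∑ x : α, r x y z))
        - (∑ x : α, ∑ y : β, ∑ z : δ, Real.negMulLog (r x y z))
        - (∑ z : δ, Real.negMulLog (∑ x : α, ∑ y : β, r x y z))) / Real.log b := by
    unfold condMI condH
    rw [hA, hB, hC, hD]
    ring
  rw [hform]
  apply div_nonneg _ hc.le
  -- the numerator as a single triple sum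
  have e1 : (∑ x : α, ∑ z : δ, Real.negMulLog (∑ y : β, r x y z))
      = ∑ x : α, ∑ y : β, ∑ z : δ, -(r x y z * Real.log (∑ y' : β, r x y' z)) := by
    refine Finset.sum_congr rfl fun x _ => ?_
    rw [Finset.sum_comm]
    refine Finset.sum_congr rfl fun z _ => ?_
    rw [Real.negMulLog, neg_mul, Finset.sum_mul, ← Finset.sum_neg_distrib]
  have e2 : (∑ y : β, ∑ z : δ, Real.negMulLog (∑ x : α, r x y z))
      = ∑ x : α, ∑ y : β, ∑ z : δ, -(r x y z * Real.log (∑ x' : α, r x' y z)) := by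
    have step : (∑ y : β, ∑ z : δ, Real.negMulLog (∑ x : α, r x y z))
        = ∑ y : β, ∑ x : α, ∑ z : δ, -(r x y z * Real.log (∑ x' : α, r x' y z)) := by
      refine Finset.sum_congr rfl fun y _ => ?_
      rw [Finset.sum_comm]
      refine Finset.sum_congr rfl fun z _ => ?_
      rw [Real.negMulLog, neg_mul, Finset.sum_mul, ← Finset.sum_neg_distrib]
    rw [step, Finset.sum_comm]
  have e3 : (∑ z : δ, Real.negMulLog (∑ x : α, ∑ y : β, r x y z))
      = ∑ x : α, ∑ y : β, ∑ z : δ, -(r x y z * Real.log (∑ x' : α, ∑ y' : β, r x' y' z)) := by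
    have step : (∑ z : δ, Real.negMulLog (∑ x : α, ∑ y : β, r x y z))
        = ∑ z : δ, ∑ x : α, ∑ y : β, -(r x y z * Real.log (∑ x' : α, ∑ y' : β, r x' y' z)) := by
      refine Finset.sum_congr rfl fun z _ => ?_
      rw [Real.negMulLog, neg_mul]
      simp only [Finset.sum_mul]
      simp only [← Finset.sum_neg_distrib]
    rw [step, Finset.sum_comm]
    exact Finset.sum_congr rfl fun x _ => Finset.sum_comm
  -- combine into one sum
  have H1 : (∑ x : α, ∑ z : δ, Real.negMulLog (∑ y : β, r x y z))
        + (∑ y : β, ∑ z : δ, Real.negMulLog (∑ x : α, r x y z))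
        - (∑ x : α, ∑ y : β, ∑ z : δ, Real.negMulLog (r x y z))
        - (∑ z : δ, Real.negMulLog (∑ x : α, ∑ y : β, r x y z))
      = ∑ x : α, ∑ y : β, ∑ z : δ,
          -(r x y z * Real.log ((∑ y' : β, r x y' z) * (∑ x' : α, r x' y z)
            / (r x y z * (∑ x' : α, ∑ y' : β, r x' y' z)))) := by
    rw [e1, e2, e3]
    simp only [← Finset.sum_add_distrib, ← Finset.sum_sub_distrib]
    refine Finset.sum_congr rfl fun x _ => Finset.sum_congr rfl fun y _ =>
      Finset.sum_congr rfl fun z _ => ?_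
    rcases (hr0 x y z).eq_or_lt with h0 | h0
    · simp [← h0, Real.negMulLog]
    · have h1 := hRxz_pos h0
      have h2 := hRyz_pos h0
      have h3 := hQz_pos h0
      rw [Real.negMulLog, Real.log_div (mul_pos h1 h2).ne' (mul_pos h0 h3).ne',
        Real.log_mul h1.ne' h2.ne', Real.log_mul h0.ne' h3.ne']
      ring
  rw [H1]
  have hIconv : (∑ x : α, ∑ y : β, ∑ z : δ,
          -(r x y z * Real.log ((∑ y' : β, r x y' z) * (∑ x' : α, r x' y z)
            / (r x y z * (∑ x' : α, ∑ y' : β, r x' y' z)))))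
      = ∑ u : α × β × δ,
          -(r u.1 u.2.1 u.2.2 * Real.log ((∑ y' : β, r u.1 y' u.2.2) * (∑ x' : α, r x' u.2.1 u.2.2)
            / (r u.1 u.2.1 u.2.2 * (∑ x' : α, ∑ y' : β, r x' y' u.2.2)))) := by
    simp only [Fintype.sum_prod_type]
  rw [hIconv, Finset.sum_neg_distrib, neg_nonneg]
  set s : Finset (α × β × δ) := Finset.univ.filter (fun u => 0 < r u.1 u.2.1 u.2.2) with hs
  have hsmem : ∀ u : α × β × δ, u ∈ s → 0 < r u.1 u.2.1 u.2.2 := fun u hu =>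
    (Finset.mem_filter.1 hu).2
  have hsub : ∑ u : α × β × δ,
        r u.1 u.2.1 u.2.2 * Real.log ((∑ y' : β, r u.1 y' u.2.2) * (∑ x' : α, r x' u.2.1 u.2.2)
            / (r u.1 u.2.1 u.2.2 * (∑ x' : α, ∑ y' : β, r x' y' u.2.2)))
      = ∑ u ∈ s,
        r u.1 u.2.1 u.2.2 * Real.log ((∑ y' : β, r u.1 y' u.2.2) * (∑ x' : α, r x' u.2.1 u.2.2)
            / (r u.1 u.2.1 u.2.2 * (∑ x' : α, ∑ y' : β, r x' y' u.2.2))) := by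
    refine (Finset.sum_subset (Finset.filter_subset _ _) fun u _ hu => ?_).symm
    have h0 : r u.1 u.2.1 u.2.2 = 0 := le_antisymm
      (not_lt.1 fun h => hu (Finset.mem_filter.2 ⟨Finset.mem_univ u, h⟩)) (hr0 _ _ _)
    rw [h0, zero_mul]
  rw [hsub]
  have hw1 : ∑ u ∈ s, r u.1 u.2.1 u.2.2 = 1 := by
    have h2 : ∑ u : α × β × δ, r u.1 u.2.1 u.2.2 = 1 := by
      simpa only [Fintype.sum_prod_type] using htot
    rw [← h2]
    refine Finset.sum_subset (Finset.filter_subset _ _) fun u _ hu => ?_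
    exact le_antisymm
      (not_lt.1 fun h => hu (Finset.mem_filter.2 ⟨Finset.mem_univ u, h⟩)) (hr0 _ _ _)
  have jensen := ConcaveOn.le_map_sum (strictConcaveOn_log_Ioi.concaveOn)
    (t := s) (w := fun u : α × β × δ => r u.1 u.2.1 u.2.2)
    (p := fun u : α × β × δ => (∑ y' : β, r u.1 y' u.2.2) * (∑ x' : α, r x' u.2.1 u.2.2)
            / (r u.1 u.2.1 u.2.2 * (∑ x' : α, ∑ y' : β, r x' y' u.2.2)))
    (fun u hu => (hsmem u hu).le) hw1
    (fun u hu => Set.mem_Ioi.2 (div_pos (mul_pos (hRxz_pos (hsmem u hu)) (hRyz_pos (hsmem u hu)))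
      (mul_pos (hsmem u hu) (hQz_pos (hsmem u hu)))))
  simp only [smul_eq_mul] at jensen
  have hwv : ∑ u ∈ s, r u.1 u.2.1 u.2.2 * ((∑ y' : β, r u.1 y' u.2.2) * (∑ x' : α, r x' u.2.1 u.2.2)
            / (r u.1 u.2.1 u.2.2 * (∑ x' : α, ∑ y' : β, r x' y' u.2.2)))
      = ∑ u ∈ s, (∑ y' : β, r u.1 y' u.2.2) * (∑ x' : α, r x' u.2.1 u.2.2)
            / (∑ x' : α, ∑ y' : β, r x' y' u.2.2) := by
    refine Finset.sum_congr rfl fun u hu => ?_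
    have h1 := hsmem u hu
    have h3 := hQz_pos h1
    field_simp
  have hterm_nonneg : ∀ u : α × β × δ,
      0 ≤ (∑ y' : β, r u.1 y' u.2.2) * (∑ x' : α, r x' u.2.1 u.2.2)
            / (∑ x' : α, ∑ y' : β, r x' y' u.2.2) := fun u =>
    div_nonneg (mul_nonneg (Finset.sum_nonneg fun i _ => hr0 _ _ _)
      (Finset.sum_nonneg fun i _ => hr0 _ _ _))
      (Finset.sum_nonneg fun i _ => Finset.sum_nonneg fun j _ => hr0 _ _ _)
  have hsum_le : ∑ u ∈ s, (∑ y' : β, r u.1 y' u.2.2) * (∑ x' : α, r x' u.2.1 u.2.2)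
            / (∑ x' : α, ∑ y' : β, r x' y' u.2.2) ≤ 1 := by
    have step1 : ∑ u ∈ s, (∑ y' : β, r u.1 y' u.2.2) * (∑ x' : α, r x' u.2.1 u.2.2)
            / (∑ x' : α, ∑ y' : β, r x' y' u.2.2)
        ≤ ∑ u : α × β × δ, (∑ y' : β, r u.1 y' u.2.2) * (∑ x' : α, r x' u.2.1 u.2.2)
            / (∑ x' : α, ∑ y' : β, r x' y' u.2.2) :=
      Finset.sum_le_sum_of_subset_of_nonneg (Finset.filter_subset _ _)
        (fun u _ _ => hterm_nonneg u)
    refine le_trans step1 (le_of_eq ?_)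
    simp only [Fintype.sum_prod_type]
    have reorder : ∑ x : α, ∑ y : β, ∑ z : δ, (∑ y' : β, r x y' z) * (∑ x' : α, r x' y z)
            / (∑ x' : α, ∑ y' : β, r x' y' z)
        = ∑ z : δ, ∑ x : α, ∑ y : β, (∑ y' : β, r x y' z) * (∑ x' : α, r x' y z)
            / (∑ x' : α, ∑ y' : β, r x' y' z) := by
      calc ∑ x : α, ∑ y : β, ∑ z : δ, (∑ y' : β, r x y' z) * (∑ x' : α, r x' y z)
            / (∑ x' : α, ∑ y' : β, r x' y' z)
          = ∑ x : α, ∑ z : δ, ∑ y : β, (∑ y' : β, r x y' z) * (∑ x' : α, r x' y z)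
            / (∑ x' : α, ∑ y' : β, r x' y' z) :=
            Finset.sum_congr rfl fun x _ => Finset.sum_comm
        _ = ∑ z : δ, ∑ x : α, ∑ y : β, (∑ y' : β, r x y' z) * (∑ x' : α, r x' y z)
            / (∑ x' : α, ∑ y' : β, r x' y' z) := Finset.sum_comm
    rw [reorder]
    have perz : ∀ z : δ, ∑ x : α, ∑ y : β, (∑ y' : β, r x y' z) * (∑ x' : α, r x' y z)
            / (∑ x' : α, ∑ y' : β, r x' y' z) = ∑ x' : α, ∑ y' : β, r x' y' z := by
      intro z
      have inner : ∀ x : α, ∑ y : β, (∑ y' : β, r x y' z) * (∑ x' : α, r x' y z)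
            / (∑ x' : α, ∑ y' : β, r x' y' z)
          = (∑ y' : β, r x y' z) * (∑ y : β, ∑ x' : α, r x' y z)
            / (∑ x' : α, ∑ y' : β, r x' y' z) := by
        intro x
        rw [← Finset.sum_div, ← Finset.mul_sum]
      simp only [inner]
      rw [← Finset.sum_div, ← Finset.sum_mul]
      have hyx : ∑ y : β, ∑ x' : α, r x' y z = ∑ x' : α, ∑ y' : β, r x' y' z :=
        Finset.sum_comm
      rw [hyx]
      rcases eq_or_ne (∑ x' : α, ∑ y' : β, r x' y' z) 0 with h | h
      · simp [h]
      · rw [mul_div_assoc, div_self h, mul_one]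
    simp only [perz]
    have : ∑ z : δ, ∑ x' : α, ∑ y' : β, r x' y' z = ∑ x : α, ∑ y : β, ∑ z : δ, r x y z :=
      calc ∑ z : δ, ∑ x' : α, ∑ y' : β, r x' y' z
          = ∑ x' : α, ∑ z : δ, ∑ y' : β, r x' y' z := Finset.sum_comm
        _ = ∑ x : α, ∑ y : β, ∑ z : δ, r x y z :=
            Finset.sum_congr rfl fun x _ => Finset.sum_comm
    rw [this, htot]
  have hlog : Real.log (∑ u ∈ s, r u.1 u.2.1 u.2.2 *
        ((∑ y' : β, r u.1 y' u.2.2) * (∑ x' : α, r x' u.2.1 u.2.2)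
            / (r u.1 u.2.1 u.2.2 * (∑ x' : α, ∑ y' : β, r x' y' u.2.2)))) ≤ 0 := by
    apply Real.log_nonpos
    · rw [hwv]
      exact Finset.sum_nonneg fun u _ => hterm_nonneg u
    · rw [hwv]; exact hsum_le
  calc ∑ u ∈ s, r u.1 u.2.1 u.2.2 * Real.log ((∑ y' : β, r u.1 y' u.2.2) * (∑ x' : α, r x' u.2.1 u.2.2)
            / (r u.1 u.2.1 u.2.2 * (∑ x' : α, ∑ y' : β, r x' y' u.2.2)))
      ≤ Real.log (∑ u ∈ s, r u.1 u.2.1 u.2.2 *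
        ((∑ y' : β, r u.1 y' u.2.2) * (∑ x' : α, r x' u.2.1 u.2.2)
            / (r u.1 u.2.1 u.2.2 * (∑ x' : α, ∑ y' : β, r x' y' u.2.2)))) := jensen
    _ ≤ 0 := hlog
end DLB4

namespace DLB5
open Real Finset DLB DLB2 DLB3 DLB4

variable {Ω : Type} [Fintype Ω] {p : Ω → ℝ} {b : ℝ}
variable {α β γ : Type} [Fintype α] [Fintype β] [Fintype γ]

lemma mutI_nonneg (hb : 1 < b) (hp : IsPMF p) (X : Ω → α) (Y : Ω → β) :
    0 ≤ mutI b p X Y := by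
  have h := condMI_nonneg hb hp X Y (fun _ : Ω => ())
  unfold condMI condH at h
  unfold mutI
  have e1 : entH b p (fun ω => (X ω, ())) = entH b p X :=
    entH_comp_inj (g := fun x : α => (x, ()))
      (fun a c h => by simpa using congrArg Prod.fst h) (fun ω => rfl)
  have e2 : entH b p (fun ω => (Y ω, ())) = entH b p Y :=
    entH_comp_inj (g := fun y : β => (y, ()))
      (fun a c h => by simpa using congrArg Prod.fst h) (fun ω => rfl)
  have e3 : entH b p (fun ω => (X ω, (Y ω, ()))) = entH b p (fun ω => (X ω, Y ω)) :=
    entH_comp_inj (g := fun u : α × β => (u.1, (u.2, ())))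
      (fun u v h => by
        have h1 := congrArg Prod.fst h
        have h2 := congrArg (fun w : α × (β × Unit) => w.2.1) h
        exact Prod.ext h1 h2) (fun ω => rfl)
  have e4 : entH b p (fun _ : Ω => ()) = 0 := entH_subsingleton hp _
  rw [e1, e2, e3, e4] at h
  linarith

lemma entH_pair_le (hb : 1 < b) (hp : IsPMF p) (X : Ω → α) (Y : Ω → β) :
    entH b p (fun ω => (X ω, Y ω)) ≤ entH b p X + entH b p Y := by
  have := mutI_nonneg hb hp X Y
  unfold mutI at this
  linarith

lemma condH_le_entH (hb : 1 < b) (hp : IsPMF p) (X : Ω → α) (Y : Ω → β) :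
    condH b p X Y ≤ entH b p X := by
  have := mutI_nonneg hb hp X Y
  unfold mutI at this
  unfold condH
  linarith

lemma condH_comp_right (hb : 1 < b) {g : β → γ} (hg : Function.Injective g)
    {X : Ω → α} {Y : Ω → β} {Y' : Ω → γ} (h : ∀ ω, Y' ω = g (Y ω)) :
    condH b p X Y' = condH b p X Y := by
  unfold condH
  rw [entH_comp_inj (b := b) hg h,
    entH_comp_inj (b := b) (g := Prod.map (id : α → α) g)
      (Function.Injective.prodMap Function.injective_id hg)
      (X := fun ω => (X ω, Y ω)) (fun ω => by rw [h ω]; rfl)]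

lemma condH_congr_right (h0 : ∀ ω, 0 ≤ p ω) {X : Ω → α} {Y Y' : Ω → β}
    (h : ∀ ω, 0 < p ω → Y ω = Y' ω) : condH b p X Y = condH b p X Y' := by
  unfold condH
  rw [entH_congr h0 (X := fun ω => (X ω, Y ω)) (Y := fun ω => (X ω, Y' ω))
      (fun ω hω => by simp only [h ω hω]), entH_congr h0 h]

/-- Data processing: conditioning on a function of `Y` gives larger conditional entropy. -/
lemma condH_le_condH_comp (hb : 1 < b) (hp : IsPMF p) (X : Ω → α) (Y : Ω → β) (F : β → γ) :
    condH b p X Y ≤ condH b p X (fun ω => F (Y ω)) := by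
  have h := condMI_nonneg hb hp X Y (fun ω => F (Y ω))
  unfold condMI at h
  have h2 : condH b p X (fun ω => (Y ω, F (Y ω))) = condH b p X Y :=
    condH_comp_right hb (g := fun s : β => (s, F s))
      (fun a c h => congrArg Prod.fst h) (fun ω => rfl)
  rw [h2] at h
  linarith

lemma condH_mono_left_pair (hb : 1 < b) (hp : IsPMF p) (W : Ω → α) (C : Ω → β) (Xv : Ω → γ) :
    condH b p W Xv ≤ condH b p (fun ω => (W ω, C ω)) Xv := by
  unfold condH
  have h2 : entH b p (fun ω => ((W ω, C ω), Xv ω))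
      = entH b p (fun ω => (C ω, (W ω, Xv ω))) :=
    (entH_comp_inj (g := fun u : β × (α × γ) => ((u.2.1, u.1), u.2.2))
      (X := fun ω => (C ω, (W ω, Xv ω)))
      (fun u v h => by
        have h1 := congrArg (fun w : (α × β) × γ => w.1.2) h
        have h2 := congrArg (fun w : (α × β) × γ => w.1.1) h
        have h3 := congrArg (fun w : (α × β) × γ => w.2) h
        simp only at h1 h2 h3
        exact Prod.ext h1 (Prod.ext h2 h3)) (fun ω => rfl))
  rw [h2]
  have := entH_snd_le hb hp C (fun ω => (W ω, Xv ω))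
  linarith

lemma condH_chain (hb : 1 < b) (W : Ω → α) (C : Ω → β) (Xv : Ω → γ) :
    condH b p (fun ω => (W ω, C ω)) Xv
      = condH b p C Xv + condH b p W (fun ω => (C ω, Xv ω)) := by
  unfold condH
  have h1 : entH b p (fun ω => ((W ω, C ω), Xv ω))
      = entH b p (fun ω => (W ω, (C ω, Xv ω))) :=
    (entH_comp_inj (g := fun u : α × (β × γ) => ((u.1, u.2.1), u.2.2))
      (X := fun ω => (W ω, (C ω, Xv ω)))
      (fun u v h => by
        have h1 := congrArg (fun w : (α × β) × γ => w.1.1) h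
        have h2 := congrArg (fun w : (α × β) × γ => w.1.2) h
        have h3 := congrArg (fun w : (α × β) × γ => w.2) h
        simp only at h1 h2 h3
        exact Prod.ext h1 (Prod.ext h2 h3)) (fun ω => rfl))
  rw [h1]
  ring

end DLB5

namespace DLB6
open Real Finset DLB DLB2 DLB3 DLB4 DLB5

variable {Ω : Type} [Fintype Ω] {p : Ω → ℝ} {b : ℝ}
variable {τ υ : Type} [Fintype τ] [Fintype υ]

lemma exists_det (hb : 1 < b) (hp : IsPMF p) {A : Ω → υ} {S : Ω → τ}
    (h : condH b p A S = 0) :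
    ∃ f : τ → υ, ∀ ω, 0 < p ω → A ω = f (S ω) := by
  classical
  have hΩ : Nonempty Ω := by
    rcases isEmpty_or_nonempty Ω with hE | hN
    · exfalso
      have := hp.2
      rw [Finset.univ_eq_empty, Finset.sum_empty] at this
      norm_num at this
    · exact hN
  set r : υ × τ → ℝ := fun u => probEvent p (fun ω => (A ω, S ω) = u) with hrdef
  have hr0 : ∀ u, 0 ≤ r u := fun u => probEvent_nonneg hp.1 _
  have hq : ∀ s, probEvent p (fun ω => S ω = s) = ∑ a : υ, r (a, s) := fun s =>
    marginal_snd A S s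
  -- from zero conditional entropy, equality of the two entropy sums
  have hc : Real.log b ≠ 0 := ne_of_gt (Real.log_pos hb)
  have hEnt : ∑ u : υ × τ, Real.negMulLog (r u)
      = ∑ s : τ, Real.negMulLog (∑ a : υ, r (a, s)) := by
    unfold condH at h
    rw [sub_eq_zero] at h
    rw [entH_eq hb, entH_eq hb] at h
    simp only [hq] at h
    exact mul_right_cancel₀ hc ((div_eq_div_iff hc hc).1 h)
  -- pointwise comparison
  have hle : ∀ u : υ × τ, u ∈ (Finset.univ : Finset (υ × τ)) →
      -(r u * Real.log (∑ a : υ, r (a, u.2))) ≤ Real.negMulLog (r u) := by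
    intro u _
    rcases (hr0 u).eq_or_lt with h0 | h0
    · rw [← h0]; simp
    · have hle' : r u ≤ ∑ a : υ, r (a, u.2) := by
        have := Finset.single_le_sum (f := fun a : υ => r (a, u.2))
          (fun a _ => hr0 _) (Finset.mem_univ u.1)
        simpa using this
      have hlog := Real.log_le_log h0 hle'
      rw [Real.negMulLog]
      nlinarith
  have hEq : ∑ u : υ × τ, -(r u * Real.log (∑ a : υ, r (a, u.2)))
      = ∑ u : υ × τ, Real.negMulLog (r u) := by
    rw [hEnt]
    rw [Fintype.sum_prod_type]
    rw [Finset.sum_comm]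
    refine Finset.sum_congr rfl fun s _ => ?_
    rw [Real.negMulLog, neg_mul, Finset.sum_mul, ← Finset.sum_neg_distrib]
  have hall := (Finset.sum_eq_sum_iff_of_le hle).1 hEq
  -- on the support, r u equals the marginal
  have hmarg : ∀ u : υ × τ, 0 < r u → r u = ∑ a : υ, r (a, u.2) := by
    intro u hu
    have h1 := hall u (Finset.mem_univ u)
    rw [Real.negMulLog, neg_mul, neg_inj] at h1
    have h2 := mul_left_cancel₀ (ne_of_gt hu) h1
    have hqpos : 0 < ∑ a : υ, r (a, u.2) := by
      refine lt_of_lt_of_le hu ?_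
      have := Finset.single_le_sum (f := fun a : υ => r (a, u.2))
        (fun a _ => hr0 _) (Finset.mem_univ u.1)
      simpa using this
    calc r u = Real.exp (Real.log (r u)) := (Real.exp_log hu).symm
      _ = Real.exp (Real.log (∑ a : υ, r (a, u.2))) := by rw [h2]
      _ = ∑ a : υ, r (a, u.2) := Real.exp_log hqpos
  -- construct the function
  refine ⟨fun s => if hs : ∃ a, 0 < r (a, s) then hs.choose else A (Classical.arbitrary Ω),
    fun ω hω => ?_⟩
  have ha0 : 0 < r (A ω, S ω) := lt_of_lt_of_le hω (single_le_probEvent hp.1 rfl)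
  have hex : ∃ a, 0 < r (a, S ω) := ⟨A ω, ha0⟩
  simp only [dif_pos hex]
  by_contra hne
  have ha1 : 0 < r (hex.choose, S ω) := hex.choose_spec
  have e0 : r (A ω, S ω) = ∑ a : υ, r (a, S ω) := hmarg _ ha0
  have e1 : r (hex.choose, S ω) = ∑ a : υ, r (a, S ω) := hmarg _ ha1
  have hpair : r (A ω, S ω) + r (hex.choose, S ω) ≤ ∑ a : υ, r (a, S ω) := by
    have hsub : ({A ω, hex.choose} : Finset υ) ⊆ Finset.univ := Finset.subset_univ _
    have := Finset.sum_le_sum_of_subset_of_nonneg hsub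
      (fun a _ _ => hr0 (a, S ω))
    rwa [Finset.sum_pair hne] at this
  have hqpos : 0 < ∑ a : υ, r (a, S ω) := lt_of_lt_of_le ha0 (by rw [e0])
  linarith [e0, e1, hpair, hqpos]

end DLB6

namespace DLB7
open Real Finset DLB DLB2 DLB3 DLB4 DLB5 DLB6

variable {Ω : Type} [Fintype Ω] {p : Ω → ℝ} {b : ℝ}
variable {υ : Type} [Fintype υ]

lemma entH_tuple_le {ι : Type} [DecidableEq ι] (hb : 1 < b) (hp : IsPMF p)
    (s : Finset ι) (A : ι → Ω → υ) :
    entH b p (fun ω => (fun n : {x // x ∈ s} => A n.1 ω)) ≤ ∑ n ∈ s, entH b p (A n) := by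
  classical
  induction s using Finset.induction_on with
  | empty =>
    rw [Finset.sum_empty]
    exact le_of_eq (entH_subsingleton hp _)
  | @insert a s ha ih =>
    have h1 : entH b p (fun ω => (fun n : {x // x ∈ insert a s} => A n.1 ω))
        = entH b p (fun ω => (A a ω, (fun n : {x // x ∈ s} => A n.1 ω))) := by
      refine entH_comp_inj
        (g := fun u : υ × ({x // x ∈ s} → υ) => fun n : {x // x ∈ insert a s} =>
          if h : n.1 = a then u.1 else u.2 ⟨n.1, (Finset.mem_insert.1 n.2).resolve_left h⟩)
        ?_ ?_
      · intro u v h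
        refine Prod.ext ?_ ?_
        · have h1 := congrFun h ⟨a, Finset.mem_insert_self a s⟩
          simpa using h1
        · funext m
          have hma : (m.1 : ι) ≠ a := fun e => ha (e ▸ m.2)
          have h2 := congrFun h ⟨m.1, Finset.mem_insert_of_mem m.2⟩
          simpa [dif_neg hma] using h2
      · intro ω
        funext n
        by_cases h : (n.1 : ι) = a
        · simp only [dif_pos h]
          rw [h]
        · simp only [dif_neg h]
    rw [h1, Finset.sum_insert ha]
    exact le_trans (entH_pair_le hb hp _ _) (by linarith)

lemma exists_top_subset {ι : Type} [DecidableEq ι] (E : Finset ι) (f : ι → ℝ) :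
    ∀ t, t ≤ E.card → ∃ X, X ⊆ E ∧ X.card = t ∧ ∀ n ∈ X, ∀ k ∈ E \ X, f k ≤ f n := by
  intro t
  induction t with
  | zero => exact fun _ => ⟨∅, Finset.empty_subset E, Finset.card_empty, by simp⟩
  | succ t ih =>
    intro ht
    obtain ⟨X, hXE, hXc, htop⟩ := ih (Nat.le_of_succ_le ht)
    have hne : (E \ X).Nonempty := by
      rw [← Finset.card_pos, Finset.card_sdiff_of_subset hXE, hXc]
      omega
    obtain ⟨n, hn, hmax⟩ := Finset.exists_max_image (E \ X) f hne
    have hnX : n ∉ X := (Finset.mem_sdiff.1 hn).2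
    refine ⟨insert n X, ?_, ?_, ?_⟩
    · exact Finset.insert_subset (Finset.mem_sdiff.1 hn).1 hXE
    · rw [Finset.card_insert_of_notMem hnX, hXc]
    · intro m hm k hk
      have hk' : k ∈ E \ X := by
        rw [Finset.mem_sdiff] at hk ⊢
        exact ⟨hk.1, fun hkX => hk.2 (Finset.mem_insert_of_mem hkX)⟩
      rcases Finset.mem_insert.1 hm with rfl | hmX
      · exact hmax k hk'
      · exact htop m hmX k hk'

lemma top_subset_sum {ι : Type} [DecidableEq ι] (E X : Finset ι) (f : ι → ℝ) (hX : X ⊆ E)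
    (htop : ∀ n ∈ X, ∀ k ∈ E \ X, f k ≤ f n) :
    (X.card : ℝ) * ∑ n ∈ E, f n ≤ (E.card : ℝ) * ∑ n ∈ X, f n := by
  rcases X.eq_empty_or_nonempty with rfl | hne
  · simp
  · have h1 : ∀ n ∈ X, X.inf' hne f ≤ f n := fun n hn => Finset.inf'_le f hn
    have h2 : ∀ k ∈ E \ X, f k ≤ X.inf' hne f := fun k hk =>
      Finset.le_inf' hne f (fun n hn => htop n hn k hk)
    have hXsum : (X.card : ℝ) * X.inf' hne f ≤ ∑ n ∈ X, f n := by
      have := Finset.card_nsmul_le_sum X f (X.inf' hne f) h1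
      simpa [nsmul_eq_mul] using this
    have hCsum : ∑ k ∈ E \ X, f k ≤ ((E \ X).card : ℝ) * X.inf' hne f := by
      have := Finset.sum_le_card_nsmul (E \ X) f (X.inf' hne f) h2
      simpa [nsmul_eq_mul] using this
    have hsplit : ∑ k ∈ E \ X, f k + ∑ n ∈ X, f n = ∑ n ∈ E, f n := Finset.sum_sdiff hX
    have hTle : X.card ≤ E.card := Finset.card_le_card hX
    have hcards : ((E \ X).card : ℝ) = (E.card : ℝ) - X.card := by
      rw [Finset.card_sdiff_of_subset hX, Nat.cast_sub hTle]
    have hT0 : (0:ℝ) ≤ X.card := Nat.cast_nonneg _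
    have hMT0 : (0:ℝ) ≤ (E.card : ℝ) - X.card := by
      rw [← hcards]; exact Nat.cast_nonneg _
    rw [hcards] at hCsum
    nlinarith [mul_le_mul_of_nonneg_left hCsum hT0, mul_le_mul_of_nonneg_left hXsum hMT0]

end DLB7

/-- Download cost lower bound from secrecy: suppose `H(W) = L`, the answers
satisfy `H(A_n | S_n) = 0` for each available server `n`, `W` is recoverable from
the answers of the available servers `[N]∖D`, and the storage at any
`R_r - K_c` available servers is independent of `W`. Then
`∑_{n∈[N]∖D} H(A_n) ≥ L·(N-|D|)/(N-R_r+K_c-|D|)`. -/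
theorem download_cost_lower_bound
    {Ω σ τ υ : Type} [Fintype Ω] [Fintype σ] [Fintype τ] [Fintype υ]
    (b : ℝ) (hb : 1 < b) (p : Ω → ℝ) (hp : IsPMF p)
    {N : ℕ} (D : Finset (Fin N)) (Rr Kc : ℕ) (L : ℝ)
    (hK : 0 < Kc) (hKR : Kc ≤ Rr) (hRN : Rr ≤ N)
    (hcard : Rr - Kc ≤ N - D.card)
    (W : Ω → σ) (S : Fin N → Ω → τ) (A : Fin N → Ω → υ)
    (hL : entH b p W = L)
    (hdet : ∀ n ∈ Finset.univ \ D, condH b p (A n) (S n) = 0)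
    (hrec : condH b p W (fun ω => (fun n : ((Finset.univ \ D : Finset (Fin N)) : Finset (Fin N)) => A n ω)) = 0)
    (hsec : ∀ X' : Finset (Fin N), X' ⊆ Finset.univ \ D → X'.card = Rr - Kc →
      mutI b p W (fun ω => (fun n : X' => S n ω)) = 0) :
    L * ((N : ℝ) - D.card) / ((N : ℝ) - Rr + Kc - D.card)
      ≤ ∑ n ∈ Finset.univ \ D, entH b p (A n) := by
  classical
  have hDle : D.card ≤ N := by
    have := Finset.card_le_univ D
    simpa [Finset.card_univ] using this
  have hmE : (Finset.univ \ D : Finset (Fin N)).card = N - D.card := by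
    rw [Finset.card_sdiff_of_subset (Finset.subset_univ D), Finset.card_univ, Fintype.card_fin]
  have htE : Rr - Kc ≤ (Finset.univ \ D : Finset (Fin N)).card := by rw [hmE]; exact hcard
  have hcast1 : ((N : ℝ) - D.card) = ((Finset.univ \ D : Finset (Fin N)).card : ℝ) := by
    rw [hmE, Nat.cast_sub hDle]
  have hcast2 : ((N : ℝ) - Rr + Kc - D.card)
      = ((Finset.univ \ D : Finset (Fin N)).card : ℝ) - ((Rr - Kc : ℕ) : ℝ) := by
    rw [hmE, Nat.cast_sub hDle, Nat.cast_sub hKR]; ring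
  -- key information-theoretic step
  have key : ∀ X' : Finset (Fin N), X' ⊆ Finset.univ \ D → X'.card = Rr - Kc →
      L ≤ ∑ n ∈ (Finset.univ \ D) \ X', entH b p (A n) := by
    intro X' hsub hcardX
    have hsec' := hsec X' hsub hcardX
    unfold mutI at hsec'
    -- H(W | S_X) = L
    have h1 : condH b p W (fun ω => (fun n : X' => S n ω)) = L := by
      unfold condH
      linarith [hL, hsec']
    -- answers are deterministic functions of storage
    have hdet' : ∀ n : X', ∃ g : τ → υ, ∀ ω, 0 < p ω → A n ω = g (S n ω) :=
      fun n => DLB6.exists_det hb hp (hdet n (hsub n.2))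
    choose fdet hfdet using hdet'
    -- H(W | A_X) ≥ H(W | S_X)
    have h2a : condH b p W (fun ω => (fun n : X' => A n ω))
        = condH b p W (fun ω => (fun g : (X' → τ) => (fun n : X' => fdet n (g n)))
            ((fun n : X' => S n ω))) :=
      DLB5.condH_congr_right hp.1 (fun ω hω => funext fun n => hfdet n ω hω)
    have h2b : condH b p W (fun ω => (fun n : X' => S n ω))
        ≤ condH b p W (fun ω => (fun g : (X' → τ) => (fun n : X' => fdet n (g n)))
            ((fun n : X' => S n ω))) :=
      DLB5.condH_le_condH_comp hb hp W (fun ω => (fun n : X' => S n ω))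
        (fun g : (X' → τ) => (fun n : X' => fdet n (g n)))
    -- H(W | A_X) ≤ H(W, A_{E∖X} | A_X)
    have h3 : condH b p W (fun ω => (fun n : X' => A n ω))
        ≤ condH b p (fun ω => (W ω, (fun n : ((Finset.univ \ D) \ X' : Finset (Fin N)) => A n ω)))
            (fun ω => (fun n : X' => A n ω)) :=
      DLB5.condH_mono_left_pair hb hp W _ _
    -- chain rule
    have h4 : condH b p (fun ω => (W ω, (fun n : ((Finset.univ \ D) \ X' : Finset (Fin N)) => A n ω)))
            (fun ω => (fun n : X' => A n ω))
        = condH b p (fun ω => (fun n : ((Finset.univ \ D) \ X' : Finset (Fin N)) => A n ω))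
            (fun ω => (fun n : X' => A n ω))
          + condH b p W (fun ω => ((fun n : ((Finset.univ \ D) \ X' : Finset (Fin N)) => A n ω),
              (fun n : X' => A n ω))) :=
      DLB5.condH_chain hb W _ _
    -- recovery: H(W | A_{E∖X}, A_X) = H(W | A_E) = 0
    have h5 : condH b p W (fun ω => ((fun n : ((Finset.univ \ D) \ X' : Finset (Fin N)) => A n ω),
              (fun n : X' => A n ω)))
        = condH b p W (fun ω => (fun n : ((Finset.univ \ D : Finset (Fin N)) : Finset (Fin N)) => A n ω)) := by
      refine DLB5.condH_comp_right hb
        (g := fun h : (((Finset.univ \ D : Finset (Fin N)) : Finset (Fin N)) → υ) =>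
          ((fun n : ((Finset.univ \ D) \ X' : Finset (Fin N)) =>
              h ⟨n.1, (Finset.mem_sdiff.1 n.2).1⟩),
           (fun n : X' => h ⟨n.1, hsub n.2⟩)))
        ?_ (fun ω => rfl)
      intro u v h
      funext n
      by_cases hn : (n.1 : Fin N) ∈ X'
      · exact congrFun (congrArg Prod.snd h) ⟨n.1, hn⟩
      · have hn' : (n.1 : Fin N) ∈ (Finset.univ \ D) \ X' := Finset.mem_sdiff.2 ⟨n.2, hn⟩
        exact congrFun (congrArg Prod.fst h) ⟨n.1, hn'⟩
    -- conditional entropy bounded by entropy, then subadditivity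
    have h7 : condH b p (fun ω => (fun n : ((Finset.univ \ D) \ X' : Finset (Fin N)) => A n ω))
            (fun ω => (fun n : X' => A n ω))
        ≤ entH b p (fun ω => (fun n : ((Finset.univ \ D) \ X' : Finset (Fin N)) => A n ω)) :=
      DLB5.condH_le_entH hb hp _ _
    have h8 : entH b p (fun ω => (fun n : ((Finset.univ \ D) \ X' : Finset (Fin N)) => A n ω))
        ≤ ∑ n ∈ (Finset.univ \ D) \ X', entH b p (A n) :=
      DLB7.entH_tuple_le hb hp _ A
    linarith [h1, h2a, h2b, h3, h4, h5, hrec, h7, h8]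
  -- choose the subset with the largest entropies
  obtain ⟨X', hX'sub, hX'card, hX'top⟩ :=
    DLB7.exists_top_subset (Finset.univ \ D) (fun n => entH b p (A n)) (Rr - Kc) htE
  have hnum := DLB7.top_subset_sum (Finset.univ \ D) X' (fun n => entH b p (A n)) hX'sub hX'top
  rw [hX'card] at hnum
  have hkey := key X' hX'sub hX'card
  have hsplit : ∑ n ∈ (Finset.univ \ D) \ X', entH b p (A n)
      + ∑ n ∈ X', entH b p (A n) = ∑ n ∈ Finset.univ \ D, entH b p (A n) :=
    Finset.sum_sdiff hX'sub
  rw [hcast1, hcast2]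
  rcases eq_or_lt_of_le htE with heq | hlt
  · rw [← heq, sub_self, div_zero]
    exact Finset.sum_nonneg fun n _ => DLB2.entH_nonneg hb hp (A n)
  · have hpos : (0:ℝ) < ((Finset.univ \ D : Finset (Fin N)).card : ℝ) - ((Rr - Kc : ℕ) : ℝ) := by
      have := Nat.cast_lt (α := ℝ) |>.2 hlt
      linarith
    rw [div_le_iff₀ hpos]
    have hM0 : (0:ℝ) ≤ ((Finset.univ \ D : Finset (Fin N)).card : ℝ) := Nat.cast_nonneg _
    nlinarith [mul_le_mul_of_nonneg_left hkey hM0, hnum, hsplit]
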